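/- Let tri : ℝ → ℝ be the 2π-periodic triangular wave tri(x) = 1 − (2/π)·arccos(cos x), let g(θ) = tri(3θ), and let n ≥ 1. Put θ_k = 2πk/n and ζ_k = exp(θ_k·I) ∈ ℂ for k ∈ Fin n, and for i ≠ j define ρ_{ij} = (g(θ_i)·ζ_i − g(θ_j)·ζ_j) / (ζ_i − ζ_j). Then |ρ_{ij}| ≤ 4 for all i ≠ j. -/

import Mathlib

/-- The 2π-periodic triangular wave `tri x = 1 − (2/π)·arccos (cos x)`. -/
noncomputable def tri (x : ℝ) : ℝ := 1 - 2 / Real.pi * Real.arccos (Real.cos x)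

lemma arccos_cos_le_abs (t : ℝ) : Real.arccos (Real.cos t) ≤ |t| := by
  rcases le_or_gt |t| Real.pi with h | h
  · rw [← Real.cos_abs, Real.arccos_cos (abs_nonneg t) h]
  · exact (Real.arccos_le_pi _).trans h.le

lemma arccos_antitone {x y : ℝ} (h : x ≤ y) : Real.arccos y ≤ Real.arccos x := by
  simp only [Real.arccos_eq_pi_div_two_sub_arcsin]
  have := Real.monotone_arcsin h
  linarith

lemma arccos_cos_add_le (a b : ℝ) :
    Real.arccos (Real.cos (a + b)) ≤ Real.arccos (Real.cos a) + Real.arccos (Real.cos b) := by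
  set A := Real.arccos (Real.cos a) with hA
  set B := Real.arccos (Real.cos b) with hB
  have hAc : Real.cos A = Real.cos a :=
    Real.cos_arccos (Real.neg_one_le_cos a) (Real.cos_le_one a)
  have hBc : Real.cos B = Real.cos b :=
    Real.cos_arccos (Real.neg_one_le_cos b) (Real.cos_le_one b)
  have hAs : Real.sin A = |Real.sin a| := by
    rw [hA, Real.sin_arccos, ← Real.sin_sq, Real.sqrt_sq_eq_abs]
  have hBs : Real.sin B = |Real.sin b| := by
    rw [hB, Real.sin_arccos, ← Real.sin_sq, Real.sqrt_sq_eq_abs]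
  have key : Real.cos (A + B) ≤ Real.cos (a + b) := by
    rw [Real.cos_add, Real.cos_add, hAc, hBc, hAs, hBs, ← abs_mul]
    have := le_abs_self (Real.sin a * Real.sin b)
    linarith
  rcases le_or_gt (A + B) Real.pi with h | h
  · have h0 : 0 ≤ A + B := add_nonneg (Real.arccos_nonneg _) (Real.arccos_nonneg _)
    calc Real.arccos (Real.cos (a + b)) ≤ Real.arccos (Real.cos (A + B)) :=
          arccos_antitone key
      _ = A + B := Real.arccos_cos h0 h
  · exact (Real.arccos_le_pi _).trans h.le

lemma arccos_cos_lip (x y : ℝ) :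
    |Real.arccos (Real.cos x) - Real.arccos (Real.cos y)| ≤ |x - y| := by
  rw [abs_sub_le_iff]
  constructor
  · have h1 := arccos_cos_add_le y (x - y)
    have h2 := arccos_cos_le_abs (x - y)
    have h3 : y + (x - y) = x := by ring
    rw [h3] at h1
    linarith
  · have h1 := arccos_cos_add_le x (y - x)
    have h2 := arccos_cos_le_abs (y - x)
    have h3 : x + (y - x) = y := by ring
    rw [h3] at h1
    rw [abs_sub_comm] at h2
    linarith

lemma abs_tri_le_one (x : ℝ) : |tri x| ≤ 1 := by
  have h1 := Real.arccos_nonneg (Real.cos x)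
  have h2 := Real.arccos_le_pi (Real.cos x)
  have hpi := Real.pi_pos
  rw [abs_le]
  unfold tri
  constructor
  · have h3 : 2 / Real.pi * Real.arccos (Real.cos x) ≤ 2 / Real.pi * Real.pi :=
      mul_le_mul_of_nonneg_left h2 (by positivity)
    rw [div_mul_cancel₀ _ hpi.ne'] at h3
    linarith
  · have h3 : 0 ≤ 2 / Real.pi * Real.arccos (Real.cos x) := by positivity
    linarith

lemma tri_sub_le (x y : ℝ) : |tri x - tri y| ≤ 2 / Real.pi * |x - y| := by
  have h := arccos_cos_lip x y
  have hpi := Real.pi_pos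
  have h0 : tri x - tri y
      = 2 / Real.pi * (Real.arccos (Real.cos y) - Real.arccos (Real.cos x)) := by
    unfold tri; ring
  rw [h0, abs_mul, abs_of_pos (by positivity), abs_sub_comm]
  exact mul_le_mul_of_nonneg_left h (by positivity)

lemma tri_int_shift (x : ℝ) (m : ℤ) : tri (x + m * (2 * Real.pi)) = tri x := by
  unfold tri
  rw [Real.cos_add_int_mul_two_pi]

lemma abs_exp_mul_I_sub_one (d : ℝ) :
    ‖Complex.exp ((d : ℂ) * Complex.I) - 1‖ = 2 * |Real.sin (d / 2)| := by
  rw [Complex.norm_def, Complex.normSq_apply]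
  simp only [Complex.sub_re, Complex.sub_im, Complex.one_re, Complex.one_im,
    Complex.exp_ofReal_mul_I_re, Complex.exp_ofReal_mul_I_im]
  have hs : Real.sin (d / 2) ^ 2 = 1 / 2 - Real.cos d / 2 := by
    have h1 := Real.cos_sq (d / 2)
    have h2 := Real.sin_sq_add_cos_sq (d / 2)
    have h3 : 2 * (d / 2) = d := by ring
    rw [h3] at h1
    linarith
  have h4 : (Real.cos d - 1) * (Real.cos d - 1) + (Real.sin d - 0) * (Real.sin d - 0)
      = (2 * |Real.sin (d / 2)|) ^ 2 := by
    have h5 := Real.sin_sq_add_cos_sq d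
    rw [mul_pow, sq_abs]
    nlinarith
  rw [h4, Real.sqrt_sq (by positivity)]

/-- `g θ = tri (3θ)`. -/
noncomputable def g (θ : ℝ) : ℝ := tri (3 * θ)

lemma g_lip (s t : ℝ) :
    |g s - g t| ≤
      3 * ‖Complex.exp ((s : ℂ) * Complex.I) - Complex.exp ((t : ℂ) * Complex.I)‖ := by
  have hpi := Real.pi_pos
  set m : ℤ := round ((s - t) / (2 * Real.pi)) with hm
  set d : ℝ := s - t - m * (2 * Real.pi) with hd
  -- |d| ≤ π
  have hd1 : |d| ≤ Real.pi := by
    have h3 := abs_sub_round ((s - t) / (2 * Real.pi))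
    have h4 : d = ((s - t) / (2 * Real.pi) - m) * (2 * Real.pi) := by
      field_simp [hd]
      ring
    rw [h4, abs_mul, abs_of_pos (by positivity : (0:ℝ) < 2 * Real.pi)]
    rw [← hm] at h3
    nlinarith
  -- chord length
  have hfac : Complex.exp ((s : ℂ) * Complex.I) - Complex.exp ((t : ℂ) * Complex.I)
      = Complex.exp ((t : ℂ) * Complex.I) * (Complex.exp (((s - t : ℝ) : ℂ) * Complex.I) - 1) := by
    have h1 : ((s : ℂ)) * Complex.I = (t : ℂ) * Complex.I + ((s - t : ℝ) : ℂ) * Complex.I := by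
      push_cast; ring
    rw [h1, Complex.exp_add, mul_sub, mul_one]
  have hchord : ‖Complex.exp ((s : ℂ) * Complex.I) - Complex.exp ((t : ℂ) * Complex.I)‖
      = 2 * |Real.sin ((s - t) / 2)| := by
    rw [hfac, norm_mul, Complex.norm_exp_ofReal_mul_I, one_mul, abs_exp_mul_I_sub_one]
  -- |sin((s-t)/2)| = |sin(d/2)|
  have hsin : |Real.sin ((s - t) / 2)| = |Real.sin (d / 2)| := by
    have h2 : (s - t) / 2 = d / 2 + m * Real.pi := by rw [hd]; ring
    rw [h2, Real.sin_add_int_mul_pi, abs_mul]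
    rcases Int.even_or_odd m with he | ho
    · rw [he.neg_one_zpow]; simp
    · rw [ho.neg_one_zpow]; simp
  -- Jordan bound:  2/π * |d| ≤ 2 * |sin(d/2)|
  have habs : |Real.sin (d / 2)| = Real.sin (|d| / 2) := by
    rcases le_or_gt 0 d with h | h
    · rw [abs_of_nonneg h, abs_of_nonneg]
      exact Real.sin_nonneg_of_nonneg_of_le_pi (by linarith) (by
        rw [abs_of_nonneg h] at hd1; linarith)
    · rw [abs_of_neg h, abs_of_nonpos, neg_div, Real.sin_neg]
      have : Real.sin (-(d / 2)) ≥ 0 := by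
        apply Real.sin_nonneg_of_nonneg_of_le_pi (by linarith)
        rw [abs_of_neg h] at hd1; linarith
      rw [Real.sin_neg] at this; linarith
  have hjordan : 2 / Real.pi * |d| ≤ 2 * |Real.sin (d / 2)| := by
    rw [habs]
    have h6 := Real.mul_le_sin (x := |d| / 2) (by positivity) (by
      have := hd1; linarith [abs_nonneg d])
    linarith
  -- Lipschitz bound on the tri part
  have h5 : 3 * s = (3 * t + 3 * d) + (3 * m : ℤ) * (2 * Real.pi) := by
    push_cast; rw [hd]; ring
  have h6 : g s = tri (3 * t + 3 * d) := by
    unfold g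
    rw [h5, tri_int_shift]
  have h7 : |g s - g t| ≤ 2 / Real.pi * (3 * |d|) := by
    rw [h6]
    have := tri_sub_le (3 * t + 3 * d) (3 * t)
    have h8 : |3 * t + 3 * d - 3 * t| = 3 * |d| := by
      rw [show 3 * t + 3 * d - 3 * t = 3 * d by ring, abs_mul]
      norm_num
    rw [h8] at this
    exact this
  rw [hchord, hsin]
  nlinarith [abs_nonneg d]

lemma decomp_bound (a b : ℝ) (u v : ℂ) (huv : u ≠ v) (ha : |a| ≤ 1) (hb : |b| ≤ 1)
    (hu : ‖u‖ = 1) (hv : ‖v‖ = 1)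
    (hk : |a - b| ≤ 3 * ‖u - v‖) :
    ‖((a : ℂ) * u - (b : ℂ) * v) / (u - v)‖ ≤ 4 := by
  have hsub : u - v ≠ 0 := sub_ne_zero.mpr huv
  have hc : 0 < ‖u - v‖ := norm_pos_iff.mpr hsub
  have hid : ((a : ℂ) * u - (b : ℂ) * v) / (u - v)
      = (((a + b) / 2 : ℝ) : ℂ) + (((a - b) / 2 : ℝ) : ℂ) * ((u + v) / (u - v)) := by
    field_simp
    push_cast
    ring
  rw [hid]
  have h1 : ‖(((a + b) / 2 : ℝ) : ℂ)‖ ≤ 1 := by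
    rw [Complex.norm_real, Real.norm_eq_abs]
    have := abs_add_le a b
    rw [abs_div]
    rw [abs_two]
    rw [div_le_one (by norm_num)]
    linarith
  have h2 : ‖(((a - b) / 2 : ℝ) : ℂ) * ((u + v) / (u - v))‖ ≤ 3 := by
    rw [norm_mul, norm_div, Complex.norm_real, Real.norm_eq_abs, abs_div, abs_two]
    have huv2 : ‖u + v‖ ≤ 2 := by
      have := norm_add_le u v
      rw [hu, hv] at this; linarith
    have hstep : |a - b| / 2 * (‖u + v‖ / ‖u - v‖)
        ≤ (3 * ‖u - v‖ / 2) * (2 / ‖u - v‖) := by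
      gcongr
    have heq : (3 * ‖u - v‖ / 2) * (2 / ‖u - v‖) = 3 := by
      field_simp
    linarith
  calc ‖(((a + b) / 2 : ℝ) : ℂ) + (((a - b) / 2 : ℝ) : ℂ) * ((u + v) / (u - v))‖
      ≤ ‖(((a + b) / 2 : ℝ) : ℂ)‖
        + ‖(((a - b) / 2 : ℝ) : ℂ) * ((u + v) / (u - v))‖ := norm_add_le _ _
    _ ≤ 1 + 3 := add_le_add h1 h2
    _ = 4 := by norm_num

/-- The angle `θ_k = 2πk/n`. -/
noncomputable def theta (n : ℕ) (k : Fin n) : ℝ := 2 * Real.pi * ((k : ℕ) : ℝ) / n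

/-- The root of unity `ζ_k = exp(θ_k · I)`. -/
noncomputable def zeta (n : ℕ) (k : Fin n) : ℂ :=
  Complex.exp (((theta n k : ℝ) : ℂ) * Complex.I)

lemma zeta_ne (n : ℕ) (hn : 1 ≤ n) (i j : Fin n) (hij : i ≠ j) : zeta n i ≠ zeta n j := by
  intro h
  apply hij
  unfold zeta at h
  rw [Complex.exp_eq_exp_iff_exists_int] at h
  obtain ⟨m, hm⟩ := h
  have hpi := Real.pi_pos
  have hn0 : (n : ℝ) ≠ 0 := by positivity
  have h1 : ((theta n i - theta n j - m * (2 * Real.pi) : ℝ) : ℂ) * Complex.I = 0 := by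
    push_cast
    linear_combination hm
  have h2 : (theta n i - theta n j - m * (2 * Real.pi) : ℝ) = 0 := by
    rcases mul_eq_zero.mp h1 with h | h
    · exact_mod_cast h
    · exact absurd h Complex.I_ne_zero
  unfold theta at h2
  have h3 : ((i : ℕ) : ℝ) - ((j : ℕ) : ℝ) = m * n := by
    field_simp at h2
    nlinarith [h2]
  have h5 : ((i : ℕ) : ℤ) - ((j : ℕ) : ℤ) = m * n := by exact_mod_cast h3
  have hiv : ((i : ℕ) : ℤ) < n := by exact_mod_cast i.isLt
  have hjv : ((j : ℕ) : ℤ) < n := by exact_mod_cast j.isLt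
  have hiv0 : (0 : ℤ) ≤ ((i : ℕ) : ℤ) := by positivity
  have hjv0 : (0 : ℤ) ≤ ((j : ℕ) : ℤ) := by positivity
  have hm0 : m = 0 := by
    rcases lt_trichotomy m 0 with h | h | h
    · have : m ≤ -1 := by omega
      nlinarith
    · exact h
    · have : 1 ≤ m := by omega
      nlinarith
  rw [hm0] at h5
  have : (i : ℕ) = (j : ℕ) := by omega
  exact Fin.ext this

/-- `ρ_{ij} = (g(θ_i)·ζ_i − g(θ_j)·ζ_j)/(ζ_i − ζ_j)`. -/
noncomputable def rho (n : ℕ) (i j : Fin n) : ℂ :=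
  (((g (theta n i) : ℝ) : ℂ) * zeta n i - ((g (theta n j) : ℝ) : ℂ) * zeta n j) /
    (zeta n i - zeta n j)

theorem stmt17 (n : ℕ) (hn : 1 ≤ n) (i j : Fin n) (hij : i ≠ j) :
    ‖rho n i j‖ ≤ 4 := by
  have hne : zeta n i ≠ zeta n j := zeta_ne n hn i j hij
  have ha : |g (theta n i)| ≤ 1 := abs_tri_le_one (3 * theta n i)
  have hb : |g (theta n j)| ≤ 1 := abs_tri_le_one (3 * theta n j)
  have hu : ‖zeta n i‖ = 1 := Complex.norm_exp_ofReal_mul_I _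
  have hv : ‖zeta n j‖ = 1 := Complex.norm_exp_ofReal_mul_I _
  have hk : |g (theta n i) - g (theta n j)| ≤ 3 * ‖zeta n i - zeta n j‖ :=
    g_lip (theta n i) (theta n j)
  exact decomp_bound _ _ _ _ hne ha hb hu hv hk
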